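/- arXiv:1202.2831 — 2 statements merged into one kernel-verified Lean document; each statement's English description precedes it below -/
import Mathlib

section
/- Let n ≥ 1, let B ⊆ R_n be a ℂ-linear subspace, and let σ = ℓ₁·ℓ₂·⋯·ℓ_n ∈ B be a product of n pairwise non-proportional binary linear forms. Assume that for every i ∈ {1,…,n} and every binary linear form s we have s·∏_{j≠i} ℓ_j ∈ B. Then B = R_n; equivalently, σ is a blow-up polynomial in the order n at the set of all its zeros, i.e. every binary form of degree n lies in B. -/
open MvPolynomial Finset


lemma fin2_eq (d : Fin 2 →₀ ℕ) : d = Finsupp.single 0 (d 0) + Finsupp.single 1 (d 1) := by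
  ext i; fin_cases i <;> simp

lemma fin2_degree (d : Fin 2 →₀ ℕ) : d.degree = d 0 + d 1 := by
  rw [Finsupp.degree_apply, Finset.sum_subset (Finset.subset_univ _)
    (by intro i _ h; simpa using h), Fin.sum_univ_two]

lemma lin_struct (s : MvPolynomial (Fin 2) ℂ) (hs : s.IsHomogeneous 1) :
    s = C (coeff (Finsupp.single 0 1) s) * X 0 + C (coeff (Finsupp.single 1 1) s) * X 1 := by
  apply MvPolynomial.ext; intro d
  rw [coeff_add, coeff_C_mul, coeff_C_mul, coeff_X', coeff_X']
  by_cases h0 : (Finsupp.single (0:Fin 2) 1) = d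
  · subst h0; simp [Finsupp.single_eq_single_iff]
  by_cases h1 : (Finsupp.single (1:Fin 2) 1) = d
  · subst h1; simp [Finsupp.single_eq_single_iff]
  rw [if_neg h0, if_neg h1]
  have hd : coeff d s = 0 := by
    apply hs.coeff_eq_zero
    intro hdeg
    rw [fin2_degree] at hdeg
    rcases Nat.add_eq_one_iff.mp hdeg with ⟨h0', h1'⟩ | ⟨h0', h1'⟩
    · have : d = Finsupp.single 1 1 := by rw [fin2_eq d, h0', h1']; simp
      exact h1 this.symm
    · have : d = Finsupp.single 0 1 := by rw [fin2_eq d, h0', h1']; simp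
      exact h0 this.symm
  simp [hd]



noncomputable def eFun (d : ℕ) (k : Fin (d+1)) : Fin 2 →₀ ℕ :=
  Finsupp.single 0 (k : ℕ) + Finsupp.single 1 (d - (k : ℕ))

lemma eFun_inj (d : ℕ) : Function.Injective (eFun d) := by
  intro k k' h
  have h0 : eFun d k 0 = eFun d k' 0 := by rw [h]
  simp only [eFun, Finsupp.add_apply, Finsupp.single_eq_same,
    Finsupp.single_eq_of_ne (by decide : (1:Fin 2) ≠ 0)] at h0
  exact Fin.ext (by simpa using h0)

lemma eFun_degree (d : ℕ) (k : Fin (d+1)) : (eFun d k).degree = d := by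
  rw [fin2_degree]
  simp only [eFun, Finsupp.add_apply, Finsupp.single_eq_same,
    Finsupp.single_eq_of_ne (by decide : (1:Fin 2) ≠ 0),
    Finsupp.single_eq_of_ne (by decide : (0:Fin 2) ≠ 1)]
  omega

lemma span_monomials_eq (d : ℕ) :
    Submodule.span ℂ (Set.range fun k : Fin (d+1) => (monomial (eFun d k) (1:ℂ))) =
      homogeneousSubmodule (Fin 2) ℂ d := by
  apply le_antisymm
  · rw [Submodule.span_le]
    rintro - ⟨k, rfl⟩
    rw [SetLike.mem_coe, mem_homogeneousSubmodule]
    exact isHomogeneous_monomial _ (eFun_degree d k)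
  · intro f hf
    rw [mem_homogeneousSubmodule] at hf
    rw [← support_sum_monomial_coeff f]
    apply Submodule.sum_mem
    intro u hu
    have hdeg : u.degree = d := by
      rw [Finsupp.degree_eq_weight_one]; exact hf (MvPolynomial.mem_support_iff.mp hu)
    have hle : u 0 < d + 1 := by rw [fin2_degree] at hdeg; omega
    have : u = eFun d ⟨u 0, hle⟩ := by
      rw [eFun]
      have : d - u 0 = u 1 := by rw [fin2_degree] at hdeg; omega
      rw [this]; exact fin2_eq u
    have key : (monomial u) (coeff u f) = (coeff u f) • (monomial (eFun d ⟨u 0, hle⟩)) (1:ℂ) := by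
      rw [smul_monomial, smul_eq_mul, mul_one, ← this]
    rw [key]
    exact Submodule.smul_mem _ _ (Submodule.subset_span ⟨_, rfl⟩)

lemma finrank_homog (d : ℕ) :
    Module.finrank ℂ (homogeneousSubmodule (Fin 2) ℂ d) = d + 1 := by
  have hmem : ∀ k : Fin (d+1), (monomial (eFun d k) (1:ℂ)) ∈ homogeneousSubmodule (Fin 2) ℂ d :=
    fun k => (mem_homogeneousSubmodule _ _).2 (isHomogeneous_monomial _ (eFun_degree d k))
  set v : Fin (d+1) → homogeneousSubmodule (Fin 2) ℂ d := fun k => ⟨_, hmem k⟩ with hv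
  have hindep : LinearIndependent ℂ v := by
    apply LinearIndependent.of_comp (homogeneousSubmodule (Fin 2) ℂ d).subtype
    have : ((homogeneousSubmodule (Fin 2) ℂ d).subtype ∘ v) =
        (fun k : Fin (d+1) => (monomial (eFun d k) (1:ℂ))) := rfl
    rw [this]
    have : (fun k : Fin (d+1) => (monomial (eFun d k) (1:ℂ))) =
        (basisMonomials (Fin 2) ℂ) ∘ eFun d := by
      funext k; simp [coe_basisMonomials]
    rw [this]
    exact (basisMonomials (Fin 2) ℂ).linearIndependent.comp _ (eFun_inj d)
  have hspan : ⊤ ≤ Submodule.span ℂ (Set.range v) := by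
    rintro ⟨f, hf⟩ -
    have hf' : f ∈ Submodule.span ℂ (Set.range fun k : Fin (d+1) => (monomial (eFun d k) (1:ℂ))) := by
      rw [span_monomials_eq]; exact hf
    have hmap : Submodule.map (homogeneousSubmodule (Fin 2) ℂ d).subtype
        (Submodule.span ℂ (Set.range v)) =
        Submodule.span ℂ (Set.range fun k : Fin (d+1) => (monomial (eFun d k) (1:ℂ))) := by
      rw [Submodule.map_span]
      congr 1
      rw [← Set.range_comp]
      rfl
    rw [← hmap] at hf'
    rcases hf' with ⟨y, hy, hyf⟩
    have hyy : y = ⟨f, hf⟩ := Subtype.ext hyf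
    rwa [← hyy]
  have b : Module.Basis (Fin (d+1)) ℂ (homogeneousSubmodule (Fin 2) ℂ d) :=
    Module.Basis.mk hindep hspan
  rw [Module.finrank_eq_card_basis b, Fintype.card_fin]


lemma eval_lin (s : MvPolynomial (Fin 2) ℂ) (hs : s.IsHomogeneous 1) (p : Fin 2 → ℂ) :
    eval p s = coeff (Finsupp.single 0 1) s * p 0 + coeff (Finsupp.single 1 1) s * p 1 := by
  conv_lhs => rw [lin_struct s hs]
  simp

/-- Let `n ≥ 1`, let `B ⊆ R_n` be a ℂ-linear subspace of the binary forms of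
degree `n`, and let `σ = ℓ₁⋯ℓ_n ∈ B` be a product of `n` pairwise non-proportional binary
linear forms.  If for every `i` and every binary linear form `s` we have
`s * ∏_{j ≠ i} ℓ j ∈ B`, then `B = R_n`. -/
theorem blowup_order_one_at_each_zero_implies_full
    (n : ℕ) (hn : 1 ≤ n)
    (B : Submodule ℂ (MvPolynomial (Fin 2) ℂ))
    (hB : B ≤ homogeneousSubmodule (Fin 2) ℂ n)
    (ℓ : Fin n → MvPolynomial (Fin 2) ℂ)
    (hℓ0 : ∀ i, ℓ i ≠ 0)
    (hℓ1 : ∀ i, (ℓ i).IsHomogeneous 1)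
    (hprop : ∀ i j, i ≠ j → ∀ a : ℂ, ℓ i ≠ a • ℓ j)
    (hσ : ∏ i, ℓ i ∈ B)
    (hblow : ∀ i : Fin n, ∀ s : MvPolynomial (Fin 2) ℂ, s ≠ 0 → s.IsHomogeneous 1 →
      s * ∏ j ∈ Finset.univ.erase i, ℓ j ∈ B) :
    B = homogeneousSubmodule (Fin 2) ℂ n := by
  classical
  set k := n - 1 with hk
  have hkn : k + 1 = n := Nat.succ_pred_eq_of_pos hn
  set a : Fin n → ℂ := fun i => coeff (Finsupp.single 0 1) (ℓ i) with ha
  set b : Fin n → ℂ := fun i => coeff (Finsupp.single 1 1) (ℓ i) with hb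
  have hstruct : ∀ i, ℓ i = C (a i) * X 0 + C (b i) * X 1 := fun i => lin_struct _ (hℓ1 i)
  have hab : ∀ i, ¬(a i = 0 ∧ b i = 0) := by
    rintro i ⟨h1, h2⟩
    apply hℓ0 i
    rw [hstruct i, h1, h2]
    simp
  set p : Fin n → (Fin 2 → ℂ) := fun i => ![-(b i), a i] with hp
  have heval : ∀ i j, eval (p i) (ℓ j) = a j * (-(b i)) + b j * (a i) := by
    intro i j
    rw [eval_lin _ (hℓ1 j)]
    simp [hp]
    rfl
  have hdet : ∀ i j, i ≠ j → a i * b j - a j * b i ≠ 0 := by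
    intro i j hij hzero
    have hz : a i * b j = a j * b i := sub_eq_zero.mp hzero
    by_cases hai : a i = 0
    · have hbi : b i ≠ 0 := fun h => hab i ⟨hai, h⟩
      have haj : a j = 0 := by
        have h0 : a j * b i = 0 := by rw [← hz, hai, zero_mul]
        exact (mul_eq_zero.mp h0).resolve_right hbi
      apply hprop j i hij.symm (b j / b i)
      rw [hstruct j, hstruct i, smul_add, smul_eq_C_mul, smul_eq_C_mul,
        ← mul_assoc, ← mul_assoc, ← C_mul, ← C_mul]
      rw [haj, hai, mul_zero, div_mul_cancel₀ _ hbi]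
    · apply hprop j i hij.symm (a j / a i)
      rw [hstruct j, hstruct i, smul_add, smul_eq_C_mul, smul_eq_C_mul,
        ← mul_assoc, ← mul_assoc, ← C_mul, ← C_mul]
      have h1 : a j / a i * a i = a j := div_mul_cancel₀ _ hai
      have h2 : a j / a i * b i = b j := by
        field_simp
        linear_combination -hzero
      rw [h1, h2]
  have hevalii : ∀ i, eval (p i) (ℓ i) = 0 := by
    intro i; rw [heval]; ring
  have hevalij : ∀ i j, i ≠ j → eval (p i) (ℓ j) ≠ 0 := by
    intro i j hij h
    apply hdet i j hij
    rw [heval] at h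
    linear_combination h
  set m : Fin n → MvPolynomial (Fin 2) ℂ := fun i => ∏ j ∈ univ.erase i, ℓ j with hmdef
  have hm : ∀ i, (m i).IsHomogeneous k := by
    intro i
    have h := IsHomogeneous.prod (univ.erase i) ℓ (fun _ => 1) (fun j _ => hℓ1 j)
    have hcard : ∑ _j ∈ univ.erase i, 1 = k := by
      rw [Finset.sum_const, smul_eq_mul, mul_one, Finset.card_erase_of_mem (mem_univ i),
        Finset.card_univ, Fintype.card_fin]
    rwa [hcard] at h
  have hmevali : ∀ i, eval (p i) (m i) ≠ 0 := by
    intro i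
    rw [hmdef]
    simp only [map_prod]
    exact Finset.prod_ne_zero_iff.2
      (fun j hj => hevalij i j (Ne.symm (Finset.ne_of_mem_erase hj)))
  have hmevalij : ∀ i j, j ≠ i → eval (p j) (m i) = 0 := by
    intro i j hji
    rw [hmdef]
    simp only [map_prod]
    exact Finset.prod_eq_zero (Finset.mem_erase.2 ⟨hji, Finset.mem_univ j⟩) (hevalii j)
  have hambient : LinearIndependent ℂ m := by
    rw [linearIndependent_iff']
    intro s g hrel i hi
    have h := congrArg (eval (p i)) hrel
    rw [map_sum, map_zero] at h
    have h2 : ∀ j ∈ s, eval (p i) (g j • m j) = g j * eval (p i) (m j) := by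
      intro j _; rw [smul_eval]
    rw [Finset.sum_congr rfl h2, Finset.sum_eq_single_of_mem i hi
      (fun j _ hji => by rw [hmevalij j i hji.symm, mul_zero])] at h
    exact (mul_eq_zero.mp h).resolve_right (hmevali i)
  have hmmem : ∀ i, m i ∈ homogeneousSubmodule (Fin 2) ℂ k :=
    fun i => (mem_homogeneousSubmodule _ _).2 (hm i)
  set v : Fin n → homogeneousSubmodule (Fin 2) ℂ k := fun i => ⟨m i, hmmem i⟩ with hv
  have hindep : LinearIndependent ℂ v := by
    apply LinearIndependent.of_comp (homogeneousSubmodule (Fin 2) ℂ k).subtype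
    exact hambient
  haveI : Nonempty (Fin n) := ⟨⟨0, hn⟩⟩
  have hcard : Fintype.card (Fin n) = Module.finrank ℂ (homogeneousSubmodule (Fin 2) ℂ k) := by
    rw [finrank_homog, Fintype.card_fin, hkn]
  set bb := basisOfLinearIndependentOfCardEqFinrank hindep hcard with hbbdef
  have hbb : ⇑bb = v := coe_basisOfLinearIndependentOfCardEqFinrank _ _
  have hspan : ∀ g : MvPolynomial (Fin 2) ℂ, g.IsHomogeneous k →
      g ∈ Submodule.span ℂ (Set.range m) := by
    intro g hg
    have hgmem : g ∈ homogeneousSubmodule (Fin 2) ℂ k := (mem_homogeneousSubmodule _ _).2 hg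
    have h1 : (⟨g, hgmem⟩ : homogeneousSubmodule (Fin 2) ℂ k) ∈
        Submodule.span ℂ (Set.range v) := by
      rw [← hbb, bb.span_eq]; trivial
    have h2 : g ∈ Submodule.map (homogeneousSubmodule (Fin 2) ℂ k).subtype
        (Submodule.span ℂ (Set.range v)) := ⟨_, h1, rfl⟩
    rwa [Submodule.map_span, ← Set.range_comp] at h2
  have hS : ∀ c : Fin 2, ∀ g : MvPolynomial (Fin 2) ℂ, g.IsHomogeneous k → X c * g ∈ B := by
    intro c g hg
    have h1 : Submodule.span ℂ (Set.range m) ≤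
        Submodule.comap (LinearMap.mulLeft ℂ (X c : MvPolynomial (Fin 2) ℂ)) B := by
      rw [Submodule.span_le]
      rintro - ⟨i, rfl⟩
      exact hblow i (X c) (X_ne_zero c) (isHomogeneous_X ℂ c)
    exact h1 (hspan g hg)
  apply le_antisymm hB
  intro f hf
  rw [mem_homogeneousSubmodule] at hf
  rw [← support_sum_monomial_coeff f]
  apply Submodule.sum_mem
  intro u hu
  have hdeg : u 0 + u 1 = n := by
    rw [← fin2_degree, Finsupp.degree_eq_weight_one]
    exact hf (MvPolynomial.mem_support_iff.mp hu)
  by_cases h0 : u 0 = 0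
  · set u' : Fin 2 →₀ ℕ := Finsupp.single 0 (u 0) + Finsupp.single 1 (u 1 - 1) with hu'def
    have hu' : u = Finsupp.single 1 1 + u' := by
      ext i
      fin_cases i <;> simp [hu'def] <;> omega
    have hmon : monomial u (coeff u f) = X 1 * monomial u' (coeff u f) := by
      rw [hu', monomial_single_add, pow_one]
    rw [hmon]
    apply hS 1
    apply isHomogeneous_monomial
    have e0 : u' 0 = u 0 := by simp [hu'def]
    have e1 : u' 1 = u 1 - 1 := by simp [hu'def]
    rw [fin2_degree, e0, e1]
    omega
  · set u' : Fin 2 →₀ ℕ := Finsupp.single 0 (u 0 - 1) + Finsupp.single 1 (u 1) with hu'def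
    have hu' : u = Finsupp.single 0 1 + u' := by
      ext i
      fin_cases i <;> simp [hu'def] <;> omega
    have hmon : monomial u (coeff u f) = X 0 * monomial u' (coeff u f) := by
      rw [hu', monomial_single_add, pow_one]
    rw [hmon]
    apply hS 0
    apply isHomogeneous_monomial
    have e0 : u' 0 = u 0 - 1 := by simp [hu'def]
    have e1 : u' 1 = u 1 := by simp [hu'def]
    rw [fin2_degree, e0, e1]
    omega
end

section
/- Let V be a ℂ-linear subspace of the space of homogeneous degree-4 polynomials in ℂ[x₀,…,x₄], and identify the space of homogeneous linear forms with ℂ⁵ via coefficients. If D ⊆ ℂ⁵ is Zariski-dense (dense for the topology whose closed sets are common zero loci of polynomials) and ℓ⁴ ∈ V for every linear form ℓ ∈ D, then V is the whole space of homogeneous degree-4 polynomials. -/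
open MvPolynomial

section Aux

noncomputable def eqf (k : Fin 5 → ℕ) : Fin 5 →₀ ℕ := Finsupp.equivFunOnFinite.symm k

lemma eqf_apply (k : Fin 5 → ℕ) (i : Fin 5) : eqf k i = k i := rfl

lemma monomial_eqf (k : Fin 5 → ℕ) :
    (monomial (eqf k) (1 : ℂ)) = ∏ i, (X i : MvPolynomial (Fin 5) ℂ) ^ k i := by
  rw [monomial_eq, C_1, one_mul, Finsupp.prod_fintype _ _ (fun i => pow_zero _)]
  rfl

lemma prod_C_mul_X_pow (a : Fin 5 → ℂ) (k : Fin 5 → ℕ) :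
    (∏ i, ((C (a i) * X i : MvPolynomial (Fin 5) ℂ)) ^ k i)
      = monomial (eqf k) (∏ i, a i ^ k i) := by
  have : (monomial (eqf k) (∏ i, a i ^ k i))
      = C (∏ i, a i ^ k i) * monomial (eqf k) (1 : ℂ) := by
    rw [C_mul_monomial, mul_one]
  rw [this, monomial_eqf, map_prod, ← Finset.prod_mul_distrib]
  refine Finset.prod_congr rfl fun i _ => ?_
  rw [mul_pow, map_pow]

end Aux

/-- Let `V` be a ℂ-linear subspace of the homogeneous degree-4 polynomials in
`ℂ[x₀,…,x₄]`, and identify linear forms with `ℂ⁵` via coefficients,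
`a ↦ ∑ i, C (a i) * X i`.  If `D ⊆ ℂ⁵` is Zariski-dense (i.e. the only polynomial
vanishing on all of `D` is the zero polynomial) and `ℓ⁴ ∈ V` for every linear form `ℓ`
with coefficients in `D`, then `V` is the whole space of homogeneous degree-4
polynomials. -/
theorem fourth_powers_over_zariski_dense_set_span
    (V : Submodule ℂ (MvPolynomial (Fin 5) ℂ))
    (hV : V ≤ homogeneousSubmodule (Fin 5) ℂ 4)
    (D : Set (Fin 5 → ℂ))
    (hD : ∀ p : MvPolynomial (Fin 5) ℂ, (∀ a ∈ D, eval a p = 0) → p = 0)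
    (hpow : ∀ a ∈ D, (∑ i, C (a i) * X i : MvPolynomial (Fin 5) ℂ) ^ 4 ∈ V) :
    V = homogeneousSubmodule (Fin 5) ℂ 4 := by
  refine le_antisymm hV ?_
  intro x hx
  by_contra hxV
  haveI : Module.Free ℂ (MvPolynomial (Fin 5) ℂ ⧸ V) := Module.Free.of_divisionRing ℂ (MvPolynomial (Fin 5) ℂ ⧸ V)
  obtain ⟨φ, hφx, hφV⟩ := V.exists_dual_map_eq_bot_of_notMem hxV inferInstance
  have hφ0 : ∀ v ∈ V, φ v = 0 := by
    intro v hv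
    have : φ v ∈ V.map φ := Submodule.mem_map_of_mem hv
    rwa [hφV, Submodule.mem_bot] at this
  -- the auxiliary polynomial q with eval a q = φ (ℓ_a ^ 4)
  set s : Finset (Fin 5 → ℕ) := Finset.piAntidiag Finset.univ 4 with hs
  set q : MvPolynomial (Fin 5) ℂ :=
    ∑ k ∈ s, monomial (eqf k)
      ((Nat.multinomial Finset.univ k : ℂ) * φ (monomial (eqf k) 1)) with hq
  have expand : ∀ a : Fin 5 → ℂ,
      (∑ i, C (a i) * X i : MvPolynomial (Fin 5) ℂ) ^ 4
        = ∑ k ∈ s, monomial (eqf k)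
            ((Nat.multinomial Finset.univ k : ℂ) * ∏ i, a i ^ k i) := by
    intro a
    rw [Finset.sum_pow_eq_sum_piAntidiag]
    refine Finset.sum_congr rfl fun k _ => ?_
    rw [prod_C_mul_X_pow]
    rw [show ((Nat.multinomial Finset.univ k : MvPolynomial (Fin 5) ℂ))
        = C ((Nat.multinomial Finset.univ k : ℂ)) from (map_natCast C _).symm, C_mul_monomial]
  have heval : ∀ a : Fin 5 → ℂ,
      eval a q = φ ((∑ i, C (a i) * X i : MvPolynomial (Fin 5) ℂ) ^ 4) := by
    intro a
    rw [expand a, map_sum, map_sum]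
    refine Finset.sum_congr rfl fun k _ => ?_
    have h1 : (monomial (eqf k) ((Nat.multinomial Finset.univ k : ℂ) * ∏ i, a i ^ k i))
        = ((Nat.multinomial Finset.univ k : ℂ) * ∏ i, a i ^ k i) • monomial (eqf k) (1 : ℂ) := by
      rw [smul_monomial, smul_eq_mul, mul_one]
    rw [h1, map_smul, smul_eq_mul, eval_monomial,
      Finsupp.prod_fintype _ _ (fun i => pow_zero _)]
    simp only [eqf_apply]
    ring
  have hq0 : q = 0 := by
    refine hD q fun a ha => ?_
    rw [heval a]
    exact hφ0 _ (hpow a ha)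
  -- deduce that φ kills every monomial of degree 4
  have hmono : ∀ d : Fin 5 →₀ ℕ, (∑ i, d i) = 4 → φ (monomial d 1) = 0 := by
    intro d hd
    have hdk : (⇑d : Fin 5 → ℕ) ∈ s := by
      rw [hs, Finset.mem_piAntidiag]
      exact ⟨hd, fun i _ => Finset.mem_univ i⟩
    have hcoeff : coeff d q = (Nat.multinomial Finset.univ ⇑d : ℂ) * φ (monomial d 1) := by
      rw [hq, coeff_sum]
      rw [Finset.sum_eq_single_of_mem (⇑d) hdk]
      · rw [show eqf ⇑d = d from Finsupp.equivFunOnFinite_symm_coe d, coeff_monomial, if_pos rfl]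
      · intro k hk hkd
        rw [coeff_monomial, if_neg]
        intro hkdd
        exact hkd (funext fun i => by rw [← eqf_apply k i, hkdd])
    have hne : (Nat.multinomial Finset.univ ⇑d : ℂ) ≠ 0 := by
      exact_mod_cast (Nat.multinomial_pos _ _).ne'
    have : coeff d q = 0 := by rw [hq0, coeff_zero]
    rw [hcoeff] at this
    exact (mul_eq_zero.1 this).resolve_left hne
  -- now φ x = 0, contradiction
  apply hφx
  rw [← support_sum_monomial_coeff x, map_sum]
  refine Finset.sum_eq_zero fun d hdsupp => ?_
  have hdeg : (∑ i, d i) = 4 := by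
    have hhom : x ∈ homogeneousSubmodule (Fin 5) ℂ 4 := hx
    rw [mem_homogeneousSubmodule] at hhom
    have := hhom (mem_support_iff.1 hdsupp)
    rw [← this]
    rw [MvPolynomial.IsHomogeneous] at *
    simp [Finsupp.weight, Finsupp.linearCombination, Finsupp.sum_fintype]
  have h1 : (monomial d (coeff d x)) = (coeff d x) • monomial d (1 : ℂ) := by
    rw [smul_monomial, smul_eq_mul, mul_one]
  rw [h1, map_smul, hmono d hdeg, smul_zero]
end
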